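/- Let Φ : ℝ^N → ℝ be continuously differentiable and satisfy (λ|A| − 1)₊ ≤ Φ(A) ≤ Λ|A| + 1 for all A ∈ ℝ^N, where 0 < λ ≤ Λ. Then the convexification Φ** is convex and continuously differentiable on ℝ^N. -/

import Mathlib

/-- The convex envelope (convexification) `Φ**` of `Φ`: the pointwise supremum
of all convex functions lying below `Φ`. -/
noncomputable def convexEnvelope {N : ℕ}
    (Φ : EuclideanSpace ℝ (Fin N) → ℝ) (A : EuclideanSpace ℝ (Fin N)) : ℝ :=
  sSup {y : ℝ | ∃ g : EuclideanSpace ℝ (Fin N) → ℝ,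
    ConvexOn ℝ Set.univ g ∧ (∀ z, g z ≤ Φ z) ∧ y = g A}


open Set Topology Filter

noncomputable section

namespace CEnv

variable {E : Type*} [NormedAddCommGroup E] [InnerProductSpace ℝ E]

local notation "⟪" x ", " y "⟫" => @inner ℝ _ _ x y

/-- subgradient of `f` at `A` -/
def IsSubgrad (f : E → ℝ) (p A : E) : Prop := ∀ x, f A + ⟪p, x - A⟫ ≤ f x

/-- values of finite convex combinations of `Φ` over points with barycenter `A` -/
def cSet (Φ : E → ℝ) (A : E) : Set ℝ :=
  {y | ∃ (n : ℕ) (t : Fin n → ℝ) (x : Fin n → E), (∀ i, 0 ≤ t i) ∧ (∑ i, t i) = 1 ∧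
    (∑ i, t i • x i) = A ∧ y = ∑ i, t i * Φ (x i)}

/-- candidate for the convex envelope -/
def cg (Φ : E → ℝ) (A : E) : ℝ := sInf (cSet Φ A)

theorem self_mem_cSet (Φ : E → ℝ) (A : E) : Φ A ∈ cSet Φ A := by
  refine ⟨1, fun _ => 1, fun _ => A, fun _ => zero_le_one, by simp, by simp, by simp⟩

theorem cSet_nonempty (Φ : E → ℝ) (A : E) : (cSet Φ A).Nonempty := ⟨_, self_mem_cSet Φ A⟩

/-- Jensen: any convex minorant of Φ evaluated at A is a lower bound for cSet Φ A. -/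
theorem le_of_mem_cSet {Φ g : E → ℝ} (hg : ConvexOn ℝ univ g) (hgΦ : ∀ z, g z ≤ Φ z)
    {A : E} {y : ℝ} (hy : y ∈ cSet Φ A) : g A ≤ y := by
  obtain ⟨n, t, x, ht0, ht1, hx, rfl⟩ := hy
  have h1 : g (∑ i, t i • x i) ≤ ∑ i, t i * g (x i) := by
    have := hg.map_sum_le (t := Finset.univ) (fun i _ => ht0 i) ht1 (fun i _ => mem_univ (x i))
    simpa [smul_eq_mul] using this
  rw [hx] at h1
  refine h1.trans (Finset.sum_le_sum fun i _ => ?_)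
  exact mul_le_mul_of_nonneg_left (hgΦ (x i)) (ht0 i)

theorem bddBelow_cSet {Φ : E → ℝ} (h0 : ∀ z, 0 ≤ Φ z) (A : E) : BddBelow (cSet Φ A) := by
  refine ⟨0, fun y hy => ?_⟩
  have := le_of_mem_cSet (g := fun _ => (0:ℝ)) (convexOn_const 0 convex_univ)
    (fun z => h0 z) hy
  simpa using this

theorem cg_le (Φ : E → ℝ) (h0 : ∀ z, 0 ≤ Φ z) (A : E) : cg Φ A ≤ Φ A :=
  csInf_le (bddBelow_cSet h0 A) (self_mem_cSet Φ A)

theorem le_cg {Φ g : E → ℝ} (hg : ConvexOn ℝ univ g) (hgΦ : ∀ z, g z ≤ Φ z) (A : E) :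
    g A ≤ cg Φ A :=
  le_csInf (cSet_nonempty Φ A) (fun _ hy => le_of_mem_cSet hg hgΦ hy)

theorem cg_nonneg {Φ : E → ℝ} (h0 : ∀ z, 0 ≤ Φ z) (A : E) : 0 ≤ cg Φ A := by
  have := le_cg (g := fun _ => (0:ℝ)) (convexOn_const 0 convex_univ) (fun z => h0 z) A
  simpa using this

theorem convexOn_cg {Φ : E → ℝ} (h0 : ∀ z, 0 ≤ Φ z) : ConvexOn ℝ univ (cg Φ) := by
  refine ⟨convex_univ, fun A _ B _ a b ha hb hab => ?_⟩
  rw [smul_eq_mul, smul_eq_mul]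
  refine le_of_forall_pos_le_add fun ε hε => ?_
  obtain ⟨yA, hyA, hyA'⟩ := Real.lt_sInf_add_pos (cSet_nonempty Φ A) (half_pos hε)
  obtain ⟨yB, hyB, hyB'⟩ := Real.lt_sInf_add_pos (cSet_nonempty Φ B) (half_pos hε)
  obtain ⟨n, t, x, ht0, ht1, hx, rfl⟩ := hyA
  obtain ⟨m, s, z, hs0, hs1, hz, rfl⟩ := hyB
  have hmem : (a * ∑ i, t i * Φ (x i)) + b * ∑ i, s i * Φ (z i) ∈
      cSet Φ (a • A + b • B) := by
    refine ⟨n + m, Fin.append (fun i => a * t i) (fun j => b * s j),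
      Fin.append x z, ?_, ?_, ?_, ?_⟩
    · intro i
      induction i using Fin.addCases with
      | left i => rw [Fin.append_left]; exact mul_nonneg ha (ht0 i)
      | right j => rw [Fin.append_right]; exact mul_nonneg hb (hs0 j)
    · rw [Fin.sum_univ_add]
      simp only [Fin.append_left, Fin.append_right]
      rw [← Finset.mul_sum, ← Finset.mul_sum, ht1, hs1]
      simpa using hab
    · rw [Fin.sum_univ_add]
      simp only [Fin.append_left, Fin.append_right]
      rw [← hx, ← hz, Finset.smul_sum, Finset.smul_sum]
      congr 1 <;> { refine Finset.sum_congr rfl fun i _ => ?_; rw [smul_smul] }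
    · rw [Fin.sum_univ_add]
      simp only [Fin.append_left, Fin.append_right]
      rw [Finset.mul_sum, Finset.mul_sum]
      congr 1 <;> { refine Finset.sum_congr rfl fun i _ => ?_; ring }
  have hle : cg Φ (a • A + b • B) ≤ (a * ∑ i, t i * Φ (x i)) + b * ∑ i, s i * Φ (z i) :=
    csInf_le (bddBelow_cSet h0 _) hmem
  have h1 : a * ∑ i, t i * Φ (x i) ≤ a * (cg Φ A + ε / 2) :=
    mul_le_mul_of_nonneg_left hyA'.le ha
  have h2 : b * ∑ i, s i * Φ (z i) ≤ b * (cg Φ B + ε / 2) :=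
    mul_le_mul_of_nonneg_left hyB'.le hb
  nlinarith [cg_nonneg h0 A, cg_nonneg h0 B]


theorem continuous_cg [FiniteDimensional ℝ E] {Φ : E → ℝ} (h0 : ∀ z, 0 ≤ Φ z) :
    Continuous (cg Φ) := by
  have := ConvexOn.continuousOn isOpen_univ (convexOn_cg h0)
  rwa [continuousOn_univ] at this

theorem exists_subgrad [CompleteSpace E] {f : E → ℝ} (hconv : ConvexOn ℝ univ f)
    (hcont : Continuous f) (A₀ : E) : ∃ p, IsSubgrad f p A₀ := by
  set s : Set (E × ℝ) := {q | f q.1 < q.2} with hs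
  have hopen : IsOpen s := isOpen_lt (hcont.comp continuous_fst) continuous_snd
  have hconvs : Convex ℝ s := by
    rintro ⟨x₁, t₁⟩ h₁ ⟨x₂, t₂⟩ h₂ a b ha hb hab
    simp only [hs, mem_setOf_eq] at h₁ h₂
    have hf := hconv.2 (mem_univ x₁) (mem_univ x₂) ha hb hab
    simp only [smul_eq_mul] at hf
    show f (a • x₁ + b • x₂) < a * t₁ + b * t₂
    rcases eq_or_lt_of_le ha with ha0 | ha0
    · have hb1 : b = 1 := by linarith
      rw [← ha0, hb1]
      simpa using h₂
    · have h1 : a * f x₁ < a * t₁ := mul_lt_mul_of_pos_left h₁ ha0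
      have h2 : b * f x₂ ≤ b * t₂ := mul_le_mul_of_nonneg_left h₂.le hb
      linarith
  have hnot : ((A₀, f A₀) : E × ℝ) ∉ s := by simp [hs]
  obtain ⟨ℓ, hℓ⟩ := geometric_hahn_banach_open_point hconvs hopen hnot
  set M : E →L[ℝ] ℝ := ℓ.comp (ContinuousLinearMap.inl ℝ E ℝ) with hM
  set β : ℝ := ℓ (0, 1) with hβ
  have hsplit : ∀ (x : E) (t : ℝ), ℓ (x, t) = M x + t * β := by
    intro x t
    have hxt : ((x, t) : E × ℝ) = ((x, 0) : E × ℝ) + t • ((0 : E), (1 : ℝ)) := by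
      simp [Prod.ext_iff]
    rw [hxt, map_add, map_smul]
    simp [hM, smul_eq_mul, hβ]
  have key : ∀ (x : E) (t : ℝ), f x < t → M x + t * β < M A₀ + f A₀ * β := by
    intro x t hxt
    have h1 := hℓ (x, t) (by simpa [hs] using hxt)
    rw [hsplit, hsplit] at h1
    exact h1
  have hβneg : β < 0 := by
    have := key A₀ (f A₀ + 1) (by linarith)
    nlinarith
  have hbound : ∀ x, M x + f x * β ≤ M A₀ + f A₀ * β := by
    intro x
    refine le_of_forall_pos_le_add fun ε hε => ?_
    have hγ : (0:ℝ) < -β := neg_pos.2 hβneg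
    have hδ : 0 < ε / (-β) := div_pos hε hγ
    have h1 := key x (f x + ε / (-β)) (by linarith)
    have hb : ε / (-β) * β = -ε := by
      rw [div_mul_eq_mul_div, div_neg, mul_div_assoc, div_self hβneg.ne, mul_one]
    nlinarith
  refine ⟨(InnerProductSpace.toDual ℝ E).symm ((-β)⁻¹ • M), fun x => ?_⟩
  rw [InnerProductSpace.toDual_symm_apply]
  have hγ : (0:ℝ) < -β := neg_pos.2 hβneg
  have h1 := hbound x
  have h2 : M x - M A₀ ≤ (f x - f A₀) * (-β) := by nlinarith
  have h3 : ((-β)⁻¹ • M) (x - A₀) = (-β)⁻¹ * (M x - M A₀) := by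
    rw [ContinuousLinearMap.smul_apply, map_sub]
    simp [smul_eq_mul]
  rw [h3]
  have h4 : (-β)⁻¹ * (M x - M A₀) ≤ (-β)⁻¹ * ((f x - f A₀) * (-β)) :=
    mul_le_mul_of_nonneg_left h2 (inv_nonneg.2 hγ.le)
  have hβ0 : β ≠ 0 := ne_of_lt hβneg
  have h5 : (-β)⁻¹ * ((f x - f A₀) * (-β)) = f x - f A₀ := by field_simp
  linarith

theorem attain [FiniteDimensional ℝ E] {lam Lam : ℝ} {Φ : E → ℝ}
    (hlam : 0 < lam) (hlL : lam ≤ Lam) (hΦc : Continuous Φ) (h0 : ∀ z, 0 ≤ Φ z)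
    (hlow : ∀ z, lam * ‖z‖ - 1 ≤ Φ z) (hup : ∀ z, Φ z ≤ Lam * ‖z‖ + 1)
    {p A₀ : E} (hp : IsSubgrad (cg Φ) p A₀) :
    ∃ y, (∀ x, Φ y - ⟪p, y⟫ ≤ Φ x - ⟪p, x⟫) ∧ Φ y - ⟪p, y⟫ = cg Φ A₀ - ⟪p, A₀⟫ := by
  set m : ℝ := cg Φ A₀ - ⟪p, A₀⟫ with hm
  have hmge : ∀ x, m ≤ Φ x - ⟪p, x⟫ := by
    intro x
    have h1 := hp x
    rw [inner_sub_right] at h1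
    have h2 : cg Φ x ≤ Φ x := cg_le Φ h0 x
    linarith
  have hLam0 : 0 < Lam := lt_of_lt_of_le hlam hlL
  set R₀ : ℝ := (Lam * ‖A₀‖ + 3) / lam with hR₀def
  have hR₀ : 0 < R₀ := by
    apply div_pos _ hlam
    have := mul_nonneg hLam0.le (norm_nonneg A₀)
    linarith
  set ρ : ℝ := 2 * R₀ with hρdef
  have hρ : 0 < ρ := by positivity
  have hcont : Continuous fun x : E => Φ x - ⟪p, x⟫ :=
    hΦc.sub (Continuous.inner continuous_const continuous_id)
  obtain ⟨y, hyK, hymin⟩ := (isCompact_closedBall (0:E) ρ).exists_isMinOn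
    ⟨0, Metric.mem_closedBall_self hρ.le⟩ hcont.continuousOn
  have claim : ∀ ε : ℝ, 0 < ε → ε ≤ 1 →
      ∃ x ∈ Metric.closedBall (0:E) ρ, Φ x - ⟪p, x⟫ < m + ε := by
    intro ε hε hε1
    obtain ⟨v, hv, hvlt⟩ := Real.lt_sInf_add_pos (cSet_nonempty Φ A₀) (half_pos hε)
    obtain ⟨n, t, x, ht0, ht1, hxA, rfl⟩ := hv
    have hsum_inner : ∑ i, t i * ⟪p, x i⟫ = ⟪p, A₀⟫ := by
      rw [← hxA, inner_sum]
      exact Finset.sum_congr rfl fun i _ => (real_inner_smul_right p (x i) (t i)).symm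
    have hE : ∑ i, t i * (Φ (x i) - ⟪p, x i⟫ - m) < ε / 2 := by
      have heq : ∑ i, t i * (Φ (x i) - ⟪p, x i⟫ - m)
          = (∑ i, t i * Φ (x i)) - ⟪p, A₀⟫ - m := by
        simp only [mul_sub]
        rw [Finset.sum_sub_distrib, Finset.sum_sub_distrib, hsum_inner, ← Finset.sum_mul,
          ht1, one_mul]
      rw [heq]
      have : cg Φ A₀ = sInf (cSet Φ A₀) := rfl
      rw [hm]
      linarith [hvlt]
    have hmom : ∑ i, t i * ‖x i‖ ≤ R₀ := by
      have hval : ∑ i, t i * Φ (x i) ≤ Lam * ‖A₀‖ + 2 := by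
        have h1 : cg Φ A₀ ≤ Φ A₀ := cg_le Φ h0 A₀
        have h2 := hup A₀
        have hcg : cg Φ A₀ = sInf (cSet Φ A₀) := rfl
        linarith [hvlt]
      have h3 : lam * ∑ i, t i * ‖x i‖ ≤ (∑ i, t i * Φ (x i)) + 1 := by
        rw [Finset.mul_sum]
        have h4 : ∀ i ∈ Finset.univ, lam * (t i * ‖x i‖) ≤ t i * Φ (x i) + t i := by
          intro i _
          have h5 : lam * ‖x i‖ ≤ Φ (x i) + 1 := by linarith [hlow (x i)]
          have := mul_le_mul_of_nonneg_left h5 (ht0 i)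
          nlinarith
        calc ∑ i, lam * (t i * ‖x i‖) ≤ ∑ i, (t i * Φ (x i) + t i) :=
              Finset.sum_le_sum h4
          _ = (∑ i, t i * Φ (x i)) + 1 := by rw [Finset.sum_add_distrib, ht1]
      rw [hR₀def, le_div_iff₀ hlam, mul_comm]
      linarith
    by_contra hcon
    push_neg at hcon
    set I := Finset.univ.filter (fun i => ‖x i‖ ≤ ρ) with hI
    have hWout : ∑ i ∈ Finset.univ.filter (fun i => ¬ ‖x i‖ ≤ ρ), t i ≤ 1/2 := by
      have h1 : ρ * ∑ i ∈ Finset.univ.filter (fun i => ¬ ‖x i‖ ≤ ρ), t i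
          ≤ ∑ i ∈ Finset.univ.filter (fun i => ¬ ‖x i‖ ≤ ρ), t i * ‖x i‖ := by
        rw [Finset.mul_sum]
        refine Finset.sum_le_sum fun i hi => ?_
        have hi' : ρ < ‖x i‖ := not_le.mp (by simpa using (Finset.mem_filter.mp hi).2)
        nlinarith [ht0 i]
      have h2 : ∑ i ∈ Finset.univ.filter (fun i => ¬ ‖x i‖ ≤ ρ), t i * ‖x i‖
          ≤ ∑ i, t i * ‖x i‖ := by
        refine Finset.sum_le_sum_of_subset_of_nonneg (Finset.filter_subset _ _) ?_
        intro i _ _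
        exact mul_nonneg (ht0 i) (norm_nonneg _)
      nlinarith
    have hWin : 1/2 ≤ ∑ i ∈ I, t i := by
      have hsplit := Finset.sum_filter_add_sum_filter_not Finset.univ (fun i => ‖x i‖ ≤ ρ) t
      rw [ht1] at hsplit
      linarith
    have hterm : ∑ i ∈ I, t i * ε ≤ ∑ i ∈ I, t i * (Φ (x i) - ⟪p, x i⟫ - m) := by
      refine Finset.sum_le_sum fun i hi => ?_
      have hxi : x i ∈ Metric.closedBall (0:E) ρ := by
        rw [Metric.mem_closedBall, dist_zero_right]
        exact (Finset.mem_filter.mp hi).2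
      have := hcon (x i) hxi
      have h6 : ε ≤ Φ (x i) - ⟪p, x i⟫ - m := by linarith
      exact mul_le_mul_of_nonneg_left h6 (ht0 i)
    have hsub : ∑ i ∈ I, t i * (Φ (x i) - ⟪p, x i⟫ - m)
        ≤ ∑ i, t i * (Φ (x i) - ⟪p, x i⟫ - m) := by
      refine Finset.sum_le_sum_of_subset_of_nonneg (Finset.filter_subset _ _) ?_
      intro i _ _
      exact mul_nonneg (ht0 i) (by linarith [hmge (x i)])
    have h7 : ε / 2 ≤ ∑ i ∈ I, t i * ε := by
      rw [← Finset.sum_mul]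
      nlinarith
    linarith
  have hym : Φ y - ⟪p, y⟫ = m := by
    have hle : Φ y - ⟪p, y⟫ ≤ m := by
      refine le_of_forall_pos_le_add fun ε hε => ?_
      obtain ⟨x, hxK, hx⟩ := claim (min ε 1) (lt_min hε one_pos) (min_le_right _ _)
      have := hymin hxK
      have hmin' : Φ y - ⟪p, y⟫ ≤ Φ x - ⟪p, x⟫ := this
      have : min ε 1 ≤ ε := min_le_left _ _
      linarith
    linarith [hmge y]
  exact ⟨y, fun x => hym ▸ hmge x, hym⟩

theorem subgrad_unique [FiniteDimensional ℝ E] {lam Lam : ℝ} {Φ : E → ℝ}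
    (hlam : 0 < lam) (hlL : lam ≤ Lam) (hC1 : ContDiff ℝ 1 Φ) (h0 : ∀ z, 0 ≤ Φ z)
    (hlow : ∀ z, lam * ‖z‖ - 1 ≤ Φ z) (hup : ∀ z, Φ z ≤ Lam * ‖z‖ + 1)
    {p q A₀ : E} (hp : IsSubgrad (cg Φ) p A₀) (hq : IsSubgrad (cg Φ) q A₀) : p = q := by
  have hΦd : Differentiable ℝ Φ := hC1.differentiable one_ne_zero
  set r : E := (2⁻¹ : ℝ) • (p + q) with hr
  have hrin : ∀ v : E, ⟪r, v⟫ = 2⁻¹ * ⟪p, v⟫ + 2⁻¹ * ⟪q, v⟫ := by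
    intro v
    rw [hr, real_inner_smul_left, inner_add_left]
    ring
  have hrsub : IsSubgrad (cg Φ) r A₀ := by
    intro x
    have h1 := hp x
    have h2 := hq x
    have h3 := hrin (x - A₀)
    linarith
  obtain ⟨y, hymin, hyval⟩ := attain hlam hlL hC1.continuous h0 hlow hup hrsub
  have hfy : cg Φ y = Φ y := by
    have h1 : cg Φ y ≤ Φ y := cg_le Φ h0 y
    have h2 := hrsub y
    rw [inner_sub_right] at h2
    linarith
  have grad_eq : ∀ s : E, IsSubgrad (cg Φ) s y → innerSL ℝ s = fderiv ℝ Φ y := by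
    intro s hs
    have hmin : ∀ x, Φ y - ⟪s, y⟫ ≤ Φ x - ⟪s, x⟫ := by
      intro x
      have h1 := hs x
      rw [inner_sub_right] at h1
      have h2 : cg Φ x ≤ Φ x := cg_le Φ h0 x
      linarith [hfy]
    have hlocal : IsLocalMin (fun x => Φ x - ⟪s, x⟫) y :=
      Filter.Eventually.of_forall fun x => hmin x
    have hderiv : HasFDerivAt (fun x => Φ x - ⟪s, x⟫) (fderiv ℝ Φ y - innerSL ℝ s) y := by
      have h := ((hΦd y).hasFDerivAt).sub ((innerSL ℝ s).hasFDerivAt)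
      exact h
    have h0' := hlocal.fderiv_eq_zero
    rw [hderiv.fderiv] at h0'
    rw [sub_eq_zero] at h0'
    exact h0'.symm
  have hpr : ⟪p, y - A₀⟫ = ⟪r, y - A₀⟫ ∧ ⟪q, y - A₀⟫ = ⟪r, y - A₀⟫ := by
    have h1 := hp y
    have h2 := hq y
    have h3 : cg Φ y = cg Φ A₀ + ⟪r, y - A₀⟫ := by
      rw [inner_sub_right]
      linarith [hfy, hyval]
    have h4 := hrin (y - A₀)
    constructor <;> linarith
  have hpy : IsSubgrad (cg Φ) p y := by
    intro x
    have h1 := hp x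
    have hx : x - y = (x - A₀) - (y - A₀) := by abel
    rw [hx, inner_sub_right]
    have h3 : cg Φ y = cg Φ A₀ + ⟪r, y - A₀⟫ := by
      rw [inner_sub_right]
      linarith [hfy, hyval]
    linarith [hpr.1]
  have hqy : IsSubgrad (cg Φ) q y := by
    intro x
    have h1 := hq x
    have hx : x - y = (x - A₀) - (y - A₀) := by abel
    rw [hx, inner_sub_right]
    have h3 : cg Φ y = cg Φ A₀ + ⟪r, y - A₀⟫ := by
      rw [inner_sub_right]
      linarith [hfy, hyval]
    linarith [hpr.2]
  have hpq : innerSL ℝ p = innerSL ℝ q := (grad_eq p hpy).trans (grad_eq q hqy).symm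
  have h5 : ⟪p - q, p - q⟫ = 0 := by
    rw [inner_sub_left]
    have h7 : ⟪p, p - q⟫ = ⟪q, p - q⟫ := by
      have := congrArg (fun L : E →L[ℝ] ℝ => L (p - q)) hpq
      simpa using this
    linarith
  have h6 : p - q = 0 := inner_self_eq_zero.mp h5
  exact sub_eq_zero.mp h6

theorem hasFDeriv_of_unique_subgrad [FiniteDimensional ℝ E] {f : E → ℝ}
    (hconv : ConvexOn ℝ univ f) (hcont : Continuous f) {p A₀ : E}
    (hp : IsSubgrad f p A₀) (huniq : ∀ q, IsSubgrad f q A₀ → q = p) :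
    HasFDerivAt f (innerSL ℝ p) A₀ := by
  classical
  set g : E → ℝ := fun x => f x - f A₀ - ⟪p, x - A₀⟫ with hgdef
  have hg0 : ∀ x, 0 ≤ g x := by
    intro x
    have := hp x
    simp only [hgdef]
    linarith
  have hgA₀ : g A₀ = 0 := by simp [hgdef]
  have hgc : Continuous g := by
    apply (hcont.sub continuous_const).sub
    exact Continuous.inner continuous_const (continuous_id.sub continuous_const)
  have hgconv : ∀ (x y : E) (a b : ℝ), 0 ≤ a → 0 ≤ b → a + b = 1 →
      g (a • x + b • y) ≤ a * g x + b * g y := by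
    intro x y a b ha hb hab
    have hf := hconv.2 (mem_univ x) (mem_univ y) ha hb hab
    simp only [smul_eq_mul] at hf
    have hlin : a • x + b • y - A₀ = a • (x - A₀) + b • (y - A₀) := by
      match_scalars <;> linarith
    have hin : ⟪p, a • x + b • y - A₀⟫ = a * ⟪p, x - A₀⟫ + b * ⟪p, y - A₀⟫ := by
      rw [hlin, inner_add_right, real_inner_smul_right, real_inner_smul_right]
    simp only [hgdef]
    rw [hin]
    have h8 : a * f A₀ + b * f A₀ = f A₀ := by rw [← add_mul, hab, one_mul]
    linarith
  have hmono : ∀ (d : E) (s t : ℝ), 0 < s → s ≤ t →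
      g (A₀ + s • d) / s ≤ g (A₀ + t • d) / t := by
    intro d s t hs hst
    have ht : 0 < t := lt_of_lt_of_le hs hst
    have ha : (0:ℝ) ≤ s / t := by positivity
    have hb : (0:ℝ) ≤ 1 - s / t := by
      rw [sub_nonneg]
      exact div_le_one_of_le₀ hst ht.le
    have hab : s / t + (1 - s / t) = 1 := by ring
    have hgc2 := hgconv (A₀ + t • d) A₀ (s / t) (1 - s / t) ha hb hab
    have hpt : (s / t) • (A₀ + t • d) + (1 - s / t) • A₀ = A₀ + s • d := by
      match_scalars <;> field_simp <;> ring
    rw [hpt, hgA₀, mul_zero, add_zero] at hgc2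
    rw [div_le_div_iff₀ hs ht]
    have h3 := mul_le_mul_of_nonneg_right hgc2 ht.le
    have h4 : s / t * g (A₀ + t • d) * t = g (A₀ + t • d) * s := by
      field_simp
    rw [h4] at h3
    exact h3
  set phi : E → ℝ := fun d => sInf ((fun u : ℝ => g (A₀ + u • d) / u) '' Ioi 0) with hphidef
  have hne : ∀ d : E, ((fun u : ℝ => g (A₀ + u • d) / u) '' Ioi 0).Nonempty :=
    fun d => ⟨_, ⟨1, mem_Ioi.mpr one_pos, rfl⟩⟩
  have hbdd : ∀ d : E, BddBelow ((fun u : ℝ => g (A₀ + u • d) / u) '' Ioi 0) := by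
    intro d
    refine ⟨0, fun v hv => ?_⟩
    obtain ⟨u, hu, rfl⟩ := hv
    exact div_nonneg (hg0 _) (le_of_lt hu)
  have hphi_le : ∀ (d : E) (u : ℝ), 0 < u → phi d ≤ g (A₀ + u • d) / u :=
    fun d u hu => csInf_le (hbdd d) ⟨u, mem_Ioi.mpr hu, rfl⟩
  have hphi_nonneg : ∀ d, 0 ≤ phi d := by
    intro d
    refine le_csInf (hne d) fun v hv => ?_
    obtain ⟨u, hu, rfl⟩ := hv
    exact div_nonneg (hg0 _) (le_of_lt hu)
  have hphi_eps : ∀ (d : E) (ε : ℝ), 0 < ε → ∃ u : ℝ, 0 < u ∧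
      g (A₀ + u • d) / u < phi d + ε := by
    intro d ε hε
    obtain ⟨v, hv, hvlt⟩ := Real.lt_sInf_add_pos (hne d) hε
    obtain ⟨u, hu, rfl⟩ := hv
    exact ⟨u, hu, hvlt⟩
  have hom_le : ∀ (c : ℝ), 0 < c → ∀ d, phi (c • d) ≤ c * phi d := by
    intro c hc d
    refine le_of_forall_pos_le_add fun ε hε => ?_
    obtain ⟨u, hu, hult⟩ := hphi_eps d (ε / c) (by positivity)
    have hs : (0:ℝ) < u / c := by positivity
    have h1 : phi (c • d) ≤ g (A₀ + (u / c) • (c • d)) / (u / c) := hphi_le _ _ hs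
    have h2 : (u / c) • (c • d) = u • d := by
      rw [smul_smul, div_mul_cancel₀ _ hc.ne']
    rw [h2, div_div_eq_mul_div] at h1
    have h3 : g (A₀ + u • d) * c / u = c * (g (A₀ + u • d) / u) := by ring
    rw [h3] at h1
    have h4 : c * (g (A₀ + u • d) / u) ≤ c * (phi d + ε / c) :=
      mul_le_mul_of_nonneg_left hult.le hc.le
    have h5 : c * (phi d + ε / c) = c * phi d + ε := by field_simp <;> ring
    linarith
  have hom : ∀ (c : ℝ), 0 < c → ∀ d, phi (c • d) = c * phi d := by
    intro c hc d
    refine le_antisymm (hom_le c hc d) ?_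
    have := hom_le c⁻¹ (by positivity) (c • d)
    rw [smul_smul, inv_mul_cancel₀ hc.ne', one_smul] at this
    have h1 := mul_le_mul_of_nonneg_left this hc.le
    rw [← mul_assoc, mul_inv_cancel₀ hc.ne', one_mul] at h1
    exact h1
  have hadd : ∀ d e : E, phi (d + e) ≤ phi d + phi e := by
    intro d e
    refine le_of_forall_pos_le_add fun ε hε => ?_
    obtain ⟨u₁, hu₁, h₁⟩ := hphi_eps d (ε / 2) (by positivity)
    obtain ⟨u₂, hu₂, h₂⟩ := hphi_eps e (ε / 2) (by positivity)
    set u : ℝ := min u₁ u₂ with hudef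
    have hu : 0 < u := lt_min hu₁ hu₂
    set t : ℝ := u / 2 with htdef
    have ht : 0 < t := by positivity
    have h2t : 2 * t = u := by rw [htdef]; ring
    have hsplit : A₀ + t • (d + e)
        = (2⁻¹:ℝ) • (A₀ + (2*t) • d) + (2⁻¹:ℝ) • (A₀ + (2*t) • e) := by
      match_scalars <;> ring
    have hgc2 := hgconv (A₀ + (2*t) • d) (A₀ + (2*t) • e) 2⁻¹ 2⁻¹
      (by norm_num) (by norm_num) (by norm_num)
    rw [← hsplit] at hgc2
    have hq1 : g (A₀ + (2*t) • d) / (2*t) ≤ phi d + ε/2 :=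
      le_trans (hmono d (2*t) u₁ (by positivity) (by rw [h2t]; exact min_le_left _ _)) h₁.le
    have hq2 : g (A₀ + (2*t) • e) / (2*t) ≤ phi e + ε/2 :=
      le_trans (hmono e (2*t) u₂ (by positivity) (by rw [h2t]; exact min_le_right _ _)) h₂.le
    have hquot : phi (d + e) ≤ g (A₀ + t • (d + e)) / t := hphi_le _ t ht
    have h7 : g (A₀ + t • (d + e)) / t
        ≤ (2⁻¹ * g (A₀ + (2*t) • d) + 2⁻¹ * g (A₀ + (2*t) • e)) / t := by gcongr
    have harith : (2⁻¹ * g (A₀ + (2*t) • d) + 2⁻¹ * g (A₀ + (2*t) • e)) / t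
        = g (A₀ + (2*t) • d) / (2*t) + g (A₀ + (2*t) • e) / (2*t) := by
      field_simp <;> ring
    rw [harith] at h7
    linarith
  -- every directional derivative of g at A₀ vanishes
  have hphi0 : phi (0:E) = 0 := by
    have h2 : phi (0:E) ≤ g (A₀ + (1:ℝ) • (0:E)) / 1 := hphi_le 0 1 one_pos
    rw [smul_zero, add_zero, hgA₀] at h2
    norm_num at h2
    exact le_antisymm h2 (hphi_nonneg 0)
  have hmain : ∀ d : E, phi d = 0 := by
    intro d
    by_contra hd
    have hdpos : 0 < phi d := lt_of_le_of_ne (hphi_nonneg d) (Ne.symm hd)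
    have hd0 : d ≠ 0 := by
      intro h
      rw [h, hphi0] at hdpos
      exact lt_irrefl 0 hdpos
    set lp : E →ₗ.[ℝ] ℝ := LinearPMap.mkSpanSingleton d (phi d) hd0 with hlpdef
    have hdom : ∀ z : lp.domain, lp z ≤ phi z := by
      rintro ⟨z, hz⟩
      obtain ⟨c, rfl⟩ := Submodule.mem_span_singleton.mp hz
      have happ : lp ⟨c • d, hz⟩ = c • phi d := LinearPMap.mkSpanSingleton'_apply _ _ _ c _
      rw [happ]
      show c • phi d ≤ phi (c • d)
      rcases lt_trichotomy c 0 with hc | hc | hc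
      · have h3 := hadd (c • d) ((-c) • d)
        have h4 : (c • d) + ((-c) • d) = (0:E) := by
          rw [← add_smul, add_neg_cancel, zero_smul]
        rw [h4, hphi0, hom (-c) (by linarith) d] at h3
        simp only [smul_eq_mul]
        linarith
      · rw [hc, zero_smul, zero_smul, hphi0]
      · rw [hom c hc d, smul_eq_mul]
    obtain ⟨l, hl1, hl2⟩ := exists_extension_of_le_sublinear lp phi hom hadd hdom
    have hld : l d = phi d := by
      have := hl1 ⟨d, Submodule.mem_span_singleton_self d⟩
      rw [this, LinearPMap.mkSpanSingleton_apply]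
    set w : E := (InnerProductSpace.toDual ℝ E).symm (LinearMap.toContinuousLinearMap l)
      with hwdef
    have hwin : ∀ v : E, ⟪w, v⟫ = l v := by
      intro v
      rw [hwdef, InnerProductSpace.toDual_symm_apply]
      simp
    have hq : IsSubgrad f (p + w) A₀ := by
      intro x
      have h1 : l (x - A₀) ≤ phi (x - A₀) := hl2 (x - A₀)
      have h2 : phi (x - A₀) ≤ g (A₀ + (1:ℝ) • (x - A₀)) / 1 := hphi_le _ 1 one_pos
      rw [one_smul, add_sub_cancel, div_one] at h2
      have h3 : g x = f x - f A₀ - ⟪p, x - A₀⟫ := rfl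
      rw [inner_add_left, hwin]
      linarith
    have hcontra := huniq (p + w) hq
    have hw0 : w = 0 := by
      have := hcontra
      rwa [add_eq_left] at this
    have hzero : phi d = 0 := by
      rw [← hld, ← hwin d, hw0, inner_zero_left]
    rw [hzero] at hdpos
    exact lt_irrefl 0 hdpos
  -- Fréchet differentiability via compactness of the sphere
  have hkey : ∀ ε : ℝ, 0 < ε → ∃ δ : ℝ, 0 < δ ∧ ∀ h : E, ‖h‖ < δ → g (A₀ + h) ≤ ε * ‖h‖ := by
    intro ε hε
    have hchoice : ∀ d : Metric.sphere (0:E) 1, ∃ u : ℝ,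
        0 < u ∧ g (A₀ + u • (d:E)) / u < ε / 2 := by
      intro d
      obtain ⟨u, hu, hult⟩ := hphi_eps (d:E) (ε/2) (by positivity)
      rw [hmain (d:E), zero_add] at hult
      exact ⟨u, hu, hult⟩
    choose T hT1 hT2 using hchoice
    set U : Metric.sphere (0:E) 1 → Set E :=
      fun d => {e : E | g (A₀ + T d • e) / T d < ε / 2} with hUdef
    have hUopen : ∀ d, IsOpen (U d) := by
      intro d
      apply isOpen_lt _ continuous_const
      exact (hgc.comp (continuous_const.add ((continuous_const.smul continuous_id)))).div_const _
    have hcover : (Metric.sphere (0:E) 1) ⊆ ⋃ d, U d := by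
      intro d hd
      exact mem_iUnion.mpr ⟨⟨d, hd⟩, hT2 ⟨d, hd⟩⟩
    obtain ⟨s₀, hs₀⟩ := (isCompact_sphere (0:E) 1).elim_finite_subcover U hUopen hcover
    by_cases hsne : s₀.Nonempty
    · set δ : ℝ := s₀.inf' hsne T with hδdef
      have hδpos : 0 < δ := by
        rw [hδdef, Finset.lt_inf'_iff]
        exact fun i _ => hT1 i
      refine ⟨δ, hδpos, fun h hh => ?_⟩
      by_cases hh0 : h = 0
      · simp [hh0, hgA₀]
      · have hnh : 0 < ‖h‖ := norm_pos_iff.mpr hh0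
        set d : E := ‖h‖⁻¹ • h with hddef
        have hd : d ∈ Metric.sphere (0:E) 1 := by
          simp [hddef, norm_smul, abs_of_nonneg (inv_nonneg.mpr hnh.le),
            inv_mul_cancel₀ hnh.ne']
        obtain ⟨i, his₀, hiU⟩ : ∃ i ∈ s₀, d ∈ U i := by
          have := hs₀ hd
          simpa using this
        have hTi : ‖h‖ ≤ T i := le_trans hh.le (Finset.inf'_le _ his₀)
        have hq := hmono d ‖h‖ (T i) hnh hTi
        have hhd : ‖h‖ • d = h := by
          rw [hddef, smul_smul, mul_inv_cancel₀ hnh.ne', one_smul]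
        rw [hhd] at hq
        have hlt : g (A₀ + h) / ‖h‖ < ε / 2 := lt_of_le_of_lt hq hiU
        have h8 := (div_lt_iff₀ hnh).mp hlt
        have h9 : ε / 2 * ‖h‖ ≤ ε * ‖h‖ := by nlinarith [norm_nonneg h]
        exact le_trans h8.le h9
    · refine ⟨1, one_pos, fun h hh => ?_⟩
      have hh0 : h = 0 := by
        by_contra hne0
        have hnh : 0 < ‖h‖ := norm_pos_iff.mpr hne0
        have hd : ‖h‖⁻¹ • h ∈ Metric.sphere (0:E) 1 := by
          simp [norm_smul, abs_of_nonneg (inv_nonneg.mpr hnh.le), inv_mul_cancel₀ hnh.ne']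
        have := hs₀ hd
        rw [Finset.not_nonempty_iff_eq_empty.mp hsne] at this
        simpa using this
      simp [hh0, hgA₀]
  rw [hasFDerivAt_iff_isLittleO_nhds_zero]
  rw [Asymptotics.isLittleO_iff]
  intro c hc
  obtain ⟨δ, hδ, hδ'⟩ := hkey c hc
  rw [Metric.eventually_nhds_iff]
  refine ⟨δ, hδ, fun h hh => ?_⟩
  rw [dist_zero_right] at hh
  have h1 := hδ' h hh
  have h2 : f (A₀ + h) - f A₀ - (innerSL ℝ p) h = g (A₀ + h) := by
    rw [hgdef]
    simp [add_sub_cancel_left]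
  rw [h2, Real.norm_of_nonneg (hg0 _)]
  exact h1

set_option maxHeartbeats 1000000 in
theorem contDiff_cg [FiniteDimensional ℝ E] {lam Lam : ℝ} {Φ : E → ℝ}
    (hlam : 0 < lam) (hlL : lam ≤ Lam) (hC1 : ContDiff ℝ 1 Φ) (h0 : ∀ z, 0 ≤ Φ z)
    (hlow : ∀ z, lam * ‖z‖ - 1 ≤ Φ z) (hup : ∀ z, Φ z ≤ Lam * ‖z‖ + 1) :
    ContDiff ℝ 1 (cg Φ) := by
  classical
  set f : E → ℝ := cg Φ with hfdef
  have hconv : ConvexOn ℝ univ f := convexOn_cg h0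
  have hcont : Continuous f := continuous_cg h0
  have hex : ∀ A : E, ∃ p, IsSubgrad f p A := fun A => exists_subgrad hconv hcont A
  set grad : E → E := fun A => Classical.choose (hex A) with hgraddef
  have hgrad : ∀ A, IsSubgrad f (grad A) A := fun A => Classical.choose_spec (hex A)
  have huniq : ∀ A q, IsSubgrad f q A → q = grad A := fun A q hq =>
    subgrad_unique hlam hlL hC1 h0 hlow hup hq (hgrad A)
  have hdiff : ∀ A, HasFDerivAt f (innerSL ℝ (grad A)) A := fun A =>
    hasFDeriv_of_unique_subgrad hconv hcont (hgrad A) (fun q hq => huniq A q hq)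
  -- local boundedness of the gradient
  have hloc : ∀ A : E, ∃ C : ℝ, ∀ B ∈ Metric.closedBall A 1, ‖grad B‖ ≤ C := by
    intro A
    obtain ⟨z, hz, hzmax⟩ := (isCompact_closedBall A 2).exists_isMaxOn
      ⟨A, Metric.mem_closedBall_self (by norm_num)⟩ hcont.continuousOn
    refine ⟨f z, fun B hB => ?_⟩
    by_cases hgB : grad B = 0
    · rw [hgB, norm_zero]
      exact le_trans (cg_nonneg h0 z) le_rfl
    · have hnB : 0 < ‖grad B‖ := norm_pos_iff.mpr hgB
      set u : E := ‖grad B‖⁻¹ • grad B with hudef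
      have hnu : ‖u‖ = 1 := by
        rw [hudef, norm_smul, Real.norm_eq_abs, abs_of_nonneg (inv_nonneg.mpr hnB.le), inv_mul_cancel₀ hnB.ne']
      have hmem : B + u ∈ Metric.closedBall A 2 := by
        rw [Metric.mem_closedBall, dist_eq_norm]
        have he : B + u - A = (B - A) + u := by abel
        rw [he]
        refine le_trans (norm_add_le _ _) ?_
        rw [Metric.mem_closedBall, dist_eq_norm] at hB
        rw [hnu]
        linarith
      have h1 := hgrad B (B + u)
      rw [add_sub_cancel_left] at h1
      have h2 : ⟪grad B, u⟫ = ‖grad B‖ := by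
        rw [hudef, real_inner_smul_right, real_inner_self_eq_norm_mul_norm]
        field_simp
      rw [h2] at h1
      have h3 : f (B + u) ≤ f z := hzmax hmem
      have h4 : 0 ≤ f B := cg_nonneg h0 B
      linarith
  -- continuity of the gradient
  have hgradcont : Continuous grad := by
    rw [continuous_iff_seqContinuous]
    intro x A hA
    apply Filter.tendsto_of_subseq_tendsto
    intro ns hns
    have hB : Filter.Tendsto (fun k => x (ns k)) Filter.atTop (𝓝 A) := hA.comp hns
    have hev : ∀ᶠ k in Filter.atTop, x (ns k) ∈ Metric.closedBall A 1 :=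
      hB (Metric.closedBall_mem_nhds A one_pos)
    obtain ⟨N, hN⟩ := Filter.eventually_atTop.mp hev
    obtain ⟨C, hC⟩ := hloc A
    have hu : ∀ k : ℕ, grad (x (ns (k + N))) ∈ Metric.closedBall (0:E) C := by
      intro k
      rw [Metric.mem_closedBall, dist_zero_right]
      exact hC _ (hN _ (Nat.le_add_left N k))
    obtain ⟨q, _, ms, hms, hqt⟩ := tendsto_subseq_of_bounded
      (Metric.isBounded_closedBall (x := (0:E)) (r := C)) hu
    have hshift : Filter.Tendsto (fun k => ms k + N) Filter.atTop Filter.atTop :=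
      Filter.tendsto_atTop_mono (fun k => le_trans (hms.id_le k) (Nat.le_add_right _ _))
        Filter.tendsto_id
    have hB' : Filter.Tendsto (fun k => x (ns (ms k + N))) Filter.atTop (𝓝 A) :=
      hB.comp hshift
    have hg' : Filter.Tendsto (fun k => grad (x (ns (ms k + N)))) Filter.atTop (𝓝 q) := hqt
    have hqsub : IsSubgrad f q A := by
      intro z
      have hineq : ∀ k : ℕ,
          f (x (ns (ms k + N))) + ⟪grad (x (ns (ms k + N))), z - x (ns (ms k + N))⟫ ≤ f z :=
        fun k => hgrad _ z
      have hlim : Filter.Tendsto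
          (fun k => f (x (ns (ms k + N))) + ⟪grad (x (ns (ms k + N))), z - x (ns (ms k + N))⟫)
          Filter.atTop (𝓝 (f A + ⟪q, z - A⟫)) := by
        apply Filter.Tendsto.add
        · exact (hcont.tendsto A).comp hB'
        · exact Filter.Tendsto.inner hg' (Filter.Tendsto.sub tendsto_const_nhds hB')
      exact le_of_tendsto hlim (Filter.Eventually.of_forall hineq)
    refine ⟨fun k => ms k + N, ?_⟩
    have hqA : q = grad A := huniq A q hqsub
    rw [← hqA]
    exact hg'
  -- conclude
  rw [contDiff_one_iff_fderiv]
  have hfd : (fun A => fderiv ℝ f A) = fun A => innerSL ℝ (grad A) :=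
    funext fun A => (hdiff A).fderiv
  refine ⟨fun A => (hdiff A).differentiableAt, ?_⟩
  have : Continuous fun A => innerSL ℝ (grad A) :=
    (innerSL ℝ).continuous.comp hgradcont
  rw [show fderiv ℝ f = fun A => innerSL ℝ (grad A) from hfd]
  exact this

end CEnv


theorem convexEnvelope_eq_cg {N : ℕ} (Φ : EuclideanSpace ℝ (Fin N) → ℝ)
    (h0 : ∀ z, 0 ≤ Φ z) : convexEnvelope Φ = CEnv.cg Φ := by
  funext A
  unfold convexEnvelope
  apply le_antisymm
  · refine csSup_le ⟨CEnv.cg Φ A, ⟨CEnv.cg Φ, CEnv.convexOn_cg h0,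
      fun z => CEnv.cg_le Φ h0 z, rfl⟩⟩ ?_
    rintro y ⟨g, hgconv, hgle, rfl⟩
    exact CEnv.le_cg hgconv hgle A
  · refine le_csSup ⟨CEnv.cg Φ A, ?_⟩ ⟨CEnv.cg Φ, CEnv.convexOn_cg h0,
      fun z => CEnv.cg_le Φ h0 z, rfl⟩
    rintro y ⟨g, hgconv, hgle, rfl⟩
    exact CEnv.le_cg hgconv hgle A

/-- If `Φ ∈ C¹(ℝ^N)` satisfies `(λ|A| − 1)₊ ≤ Φ(A) ≤ Λ|A| + 1`, then its
convexification `Φ**` is convex and continuously differentiable. -/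
theorem convexEnvelope_convex_and_C1 {N : ℕ} (lam Lam : ℝ)
    (hlam : 0 < lam) (hlL : lam ≤ Lam)
    (Φ : EuclideanSpace ℝ (Fin N) → ℝ)
    (hC1 : ContDiff ℝ 1 Φ)
    (hlow : ∀ A, max (lam * ‖A‖ - 1) 0 ≤ Φ A)
    (hup : ∀ A, Φ A ≤ Lam * ‖A‖ + 1) :
    ConvexOn ℝ Set.univ (convexEnvelope Φ) ∧
      ContDiff ℝ 1 (convexEnvelope Φ) := by
  have h0 : ∀ z, 0 ≤ Φ z := fun z => le_trans (le_max_right _ _) (hlow z)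
  have hlow' : ∀ z, lam * ‖z‖ - 1 ≤ Φ z := fun z => le_trans (le_max_left _ _) (hlow z)
  have henv : convexEnvelope Φ = CEnv.cg Φ := convexEnvelope_eq_cg Φ h0
  rw [henv]
  exact ⟨CEnv.convexOn_cg h0, CEnv.contDiff_cg hlam hlL hC1 h0 hlow' hup⟩
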